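/- Let φ be an isotropic real-valued function of 3×3 real symmetric matrices (φ(RσRᵀ) = φ(σ) for all orthogonal R) and let φ̃(σ₁,σ₂,σ₃) = φ(diag(σ₁,σ₂,σ₃)) be the corresponding function of principal values. Fix a symmetric matrix σ with eigenvalues (σ₁,σ₂,σ₃). Then the following are equivalent: (i) there exists a symmetric matrix Q such that φ(σ′) − φ(σ) ≥ Q·(σ′ − σ) for all symmetric σ′; (ii) there exists (Q₁,Q₂,Q₃) ∈ ℝ³ such that φ̃(σ₁′,σ₂′,σ₃′) − φ̃(σ₁,σ₂,σ₃) ≥ Σᵢ Qᵢ(σᵢ′ − σᵢ) for all (σ₁′,σ₂′,σ₃′) ∈ ℝ³. Consequently, convexity of an isotropic (not necessarily smooth) function of a symmetric tensor is equivalent to convexity of the corresponding function of its principal values. -/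

import Mathlib

open Matrix

namespace Hill
open Finset


noncomputable def UU {σ : Matrix (Fin 3) (Fin 3) ℝ} (hσ : σ.IsHermitian) :
    Matrix (Fin 3) (Fin 3) ℝ := (hσ.eigenvectorUnitary : Matrix (Fin 3) (Fin 3) ℝ)

lemma U_mul_transpose {σ : Matrix (Fin 3) (Fin 3) ℝ} (hσ : σ.IsHermitian) :
    UU hσ * (UU hσ)ᵀ = 1 := by
  have := (Matrix.mem_unitaryGroup_iff).mp hσ.eigenvectorUnitary.2
  simpa [UU, Matrix.star_eq_conjTranspose, conjTranspose_eq_transpose_of_trivial] using this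

lemma transpose_mul_U {σ : Matrix (Fin 3) (Fin 3) ℝ} (hσ : σ.IsHermitian) :
    (UU hσ)ᵀ * UU hσ = 1 := by
  have := (Matrix.mem_unitaryGroup_iff').mp hσ.eigenvectorUnitary.2
  simpa [UU, Matrix.star_eq_conjTranspose, conjTranspose_eq_transpose_of_trivial] using this

lemma spectral {σ : Matrix (Fin 3) (Fin 3) ℝ} (hσ : σ.IsHermitian) :
    σ = UU hσ * diagonal hσ.eigenvalues * (UU hσ)ᵀ := by
  have h := hσ.spectral_theorem
  have h2 : (RCLike.ofReal ∘ hσ.eigenvalues : Fin 3 → ℝ) = hσ.eigenvalues := by ext i; simp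
  rw [h2] at h
  simpa [UU, Matrix.star_eq_conjTranspose, conjTranspose_eq_transpose_of_trivial] using h

lemma trace_diag_mul (q : Fin 3 → ℝ) (A : Matrix (Fin 3) (Fin 3) ℝ) :
    (diagonal q * A).trace = ∑ i, q i * A i i := by
  simp [Matrix.trace, Matrix.diag, Matrix.diagonal_mul]

lemma perm_conj (τ : Equiv.Perm (Fin 3)) (v : Fin 3 → ℝ) :
    (τ.permMatrix ℝ) * diagonal v * (τ.permMatrix ℝ)ᵀ = diagonal (v ∘ τ) := by
  ext i j
  rw [Equiv.Perm.permMatrix, PEquiv.toMatrix_toPEquiv_mul]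
  simp [Matrix.mul_apply, PEquiv.toMatrix_apply, Equiv.toPEquiv_apply,
    Matrix.diagonal_apply, Matrix.transpose_apply, Matrix.submatrix_apply]
  rw [Finset.sum_eq_single (τ i) (by intro b _ hb; simp [Ne.symm hb]) (by simp)]
  simp [Equiv.symm_apply_eq, eq_comm]

lemma perm_orth (τ : Equiv.Perm (Fin 3)) :
    (τ.permMatrix ℝ) * (τ.permMatrix ℝ)ᵀ = 1 := by
  ext i j
  rw [Equiv.Perm.permMatrix, PEquiv.toMatrix_toPEquiv_mul]
  simp [PEquiv.toMatrix_apply, Equiv.toPEquiv_apply, Matrix.transpose_apply,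
    Matrix.submatrix_apply, Matrix.one_apply]

variable {φ : Matrix (Fin 3) (Fin 3) ℝ → ℝ}

lemma phi_diag_eigen
    (hiso : ∀ (σ : Matrix (Fin 3) (Fin 3) ℝ), σ.IsHermitian →
      ∀ R : Matrix (Fin 3) (Fin 3) ℝ, R * Rᵀ = 1 → φ (R * σ * Rᵀ) = φ σ)
    {σ : Matrix (Fin 3) (Fin 3) ℝ} (hσ : σ.IsHermitian) :
    φ σ = φ (diagonal hσ.eigenvalues) := by
  have h := hiso (diagonal hσ.eigenvalues) (isHermitian_diagonal _) (UU hσ) (U_mul_transpose hσ)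
  rw [← spectral hσ] at h
  exact h

lemma phi_perm
    (hiso : ∀ (σ : Matrix (Fin 3) (Fin 3) ℝ), σ.IsHermitian →
      ∀ R : Matrix (Fin 3) (Fin 3) ℝ, R * Rᵀ = 1 → φ (R * σ * Rᵀ) = φ σ)
    (τ : Equiv.Perm (Fin 3)) (v : Fin 3 → ℝ) :
    φ (diagonal (v ∘ τ)) = φ (diagonal v) := by
  rw [← perm_conj]
  exact hiso _ (isHermitian_diagonal _) _ (perm_orth τ)

lemma trace_conj (Q W D : Matrix (Fin 3) (Fin 3) ℝ) :
    (Q * (W * D * Wᵀ)).trace = ((Wᵀ * Q * W) * D).trace := by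
  calc (Q * (W * D * Wᵀ)).trace = ((Q * W * D) * Wᵀ).trace := by
        rw [← mul_assoc, ← mul_assoc]
    _ = (Wᵀ * (Q * W * D)).trace := trace_mul_comm _ _
    _ = ((Wᵀ * Q * W) * D).trace := by rw [← mul_assoc, ← mul_assoc]

/-- forward: tensorial subgradient gives vector subgradient -/
lemma vector_of_tensor
    (hiso : ∀ (σ : Matrix (Fin 3) (Fin 3) ℝ), σ.IsHermitian →
      ∀ R : Matrix (Fin 3) (Fin 3) ℝ, R * Rᵀ = 1 → φ (R * σ * Rᵀ) = φ σ)
    {σ : Matrix (Fin 3) (Fin 3) ℝ} (hσ : σ.IsHermitian)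
    (Q : Matrix (Fin 3) (Fin 3) ℝ)
    (hQ : ∀ σ' : Matrix (Fin 3) (Fin 3) ℝ, σ'.IsHermitian →
      φ σ' - φ σ ≥ (Q * (σ' - σ)).trace) :
    ∃ Qv : Fin 3 → ℝ, ∀ v : Fin 3 → ℝ,
      φ (Matrix.diagonal v) - φ (Matrix.diagonal hσ.eigenvalues) ≥
        ∑ i, Qv i * (v i - hσ.eigenvalues i) := by
  set W := UU hσ with hW
  refine ⟨fun i => (Wᵀ * Q * W) i i, fun v => ?_⟩
  set σ' := W * diagonal v * Wᵀ with hσ'def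
  have hσ' : σ'.IsHermitian := by
    have h := Matrix.isHermitian_mul_mul_conjTranspose W (isHermitian_diagonal v)
    rwa [conjTranspose_eq_transpose_of_trivial] at h
  have hval : φ σ' = φ (diagonal v) := hiso _ (isHermitian_diagonal v) W (U_mul_transpose hσ)
  have h := hQ σ' hσ'
  rw [hval] at h
  have htr : (Q * (σ' - σ)).trace
      = ∑ i, (Wᵀ * Q * W) i i * (v i - hσ.eigenvalues i) := by
    rw [mul_sub, trace_sub]
    have h1 : (Q * σ).trace = ((Wᵀ * Q * W) * diagonal hσ.eigenvalues).trace := by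
      conv_lhs => rw [spectral hσ]
      rw [trace_conj]
    have h2 : (Q * σ').trace = ((Wᵀ * Q * W) * diagonal v).trace := by
      rw [hσ'def, trace_conj]
    rw [h1, h2, trace_mul_comm _ (diagonal v), trace_mul_comm _ (diagonal hσ.eigenvalues),
      trace_diag_mul, trace_diag_mul, ← Finset.sum_sub_distrib]
    exact Finset.sum_congr rfl fun i _ => by ring
  rw [phi_diag_eigen hiso hσ] at h
  rw [← htr]
  exact h


lemma trace_conj' (Dq W σ' : Matrix (Fin 3) (Fin 3) ℝ) :
    (W * Dq * Wᵀ * σ').trace = (Dq * (Wᵀ * σ' * W)).trace := by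
  rw [trace_mul_comm, trace_conj σ' W Dq, trace_mul_comm]

lemma hP (τ : Equiv.Perm (Fin 3)) (i j : Fin 3) :
    (τ.permMatrix ℝ) i j = if j = τ i then 1 else 0 := by
  simp only [Equiv.Perm.permMatrix, PEquiv.toMatrix_apply, Equiv.toPEquiv_apply,
    Option.mem_def, Option.some.injEq]
  by_cases h : j = τ i
  · simp [h]
  · simp only [h, if_false, ite_eq_right_iff, one_ne_zero, imp_false]
    exact fun hc => h hc.symm

/-- backward: vector subgradient gives tensorial subgradient -/
lemma tensor_of_vector
    (hiso : ∀ (σ : Matrix (Fin 3) (Fin 3) ℝ), σ.IsHermitian →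
      ∀ R : Matrix (Fin 3) (Fin 3) ℝ, R * Rᵀ = 1 → φ (R * σ * Rᵀ) = φ σ)
    {σ : Matrix (Fin 3) (Fin 3) ℝ} (hσ : σ.IsHermitian) (Qv : Fin 3 → ℝ)
    (hQv : ∀ v : Fin 3 → ℝ,
      φ (Matrix.diagonal v) - φ (Matrix.diagonal hσ.eigenvalues) ≥
        ∑ i, Qv i * (v i - hσ.eigenvalues i)) :
    ∃ Q : Matrix (Fin 3) (Fin 3) ℝ, Q.IsHermitian ∧
      ∀ σ' : Matrix (Fin 3) (Fin 3) ℝ, σ'.IsHermitian →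
        φ σ' - φ σ ≥ (Q * (σ' - σ)).trace := by
  set W := UU hσ with hW
  set Q := W * diagonal Qv * Wᵀ with hQdef
  have hQH : Q.IsHermitian := by
    have h := Matrix.isHermitian_mul_mul_conjTranspose W (isHermitian_diagonal Qv)
    rwa [conjTranspose_eq_transpose_of_trivial] at h
  have hWQW : Wᵀ * Q * W = diagonal Qv := by
    calc Wᵀ * (W * diagonal Qv * Wᵀ) * W
        = (Wᵀ * W) * diagonal Qv * (Wᵀ * W) := by noncomm_ring
      _ = diagonal Qv := by rw [transpose_mul_U hσ, one_mul, mul_one]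
  refine ⟨Q, hQH, fun σ' hσ' => ?_⟩
  set μ := hσ'.eigenvalues with hμ
  set W' := UU hσ' with hW'
  set V := Wᵀ * W' with hV
  have hVVt : V * Vᵀ = 1 := by
    have e : Wᵀ * W' * (Wᵀ * W')ᵀ = Wᵀ * (W' * W'ᵀ) * W := by
      rw [transpose_mul, transpose_transpose]; noncomm_ring
    rw [hV, e, U_mul_transpose hσ', mul_one, transpose_mul_U hσ]
  have hVtV : Vᵀ * V = 1 := by
    have e : (Wᵀ * W')ᵀ * (Wᵀ * W') = W'ᵀ * (W * Wᵀ) * W' := by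
      rw [transpose_mul, transpose_transpose]; noncomm_ring
    rw [hV, e, U_mul_transpose hσ, mul_one, transpose_mul_U hσ']
  have hA : Wᵀ * σ' * W = V * diagonal μ * Vᵀ := by
    conv_lhs => rw [spectral hσ']
    rw [hV, transpose_mul, transpose_transpose]
    noncomm_ring
  have hAdiag : ∀ i, (Wᵀ * σ' * W) i i = ∑ j, (V i j)^2 * μ j := by
    intro i
    rw [hA]
    simp only [Matrix.mul_apply]
    refine Finset.sum_congr rfl fun j _ => ?_
    have e : ∑ k, V i k * diagonal μ k j = V i j * μ j := by
      simp [Matrix.diagonal_apply, mul_ite, mul_zero, Finset.sum_ite_eq']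
    rw [Matrix.transpose_apply, e]
    ring
  set B : Matrix (Fin 3) (Fin 3) ℝ := Matrix.of fun i j => (V i j)^2 with hBdef
  have hB : B ∈ doublyStochastic ℝ (Fin 3) := by
    rw [mem_doublyStochastic_iff_sum]
    refine ⟨fun i j => sq_nonneg _, fun i => ?_, fun j => ?_⟩
    · have h := congrFun (congrFun hVVt i) i
      simpa [Matrix.mul_apply, Matrix.one_apply, Matrix.transpose_apply, sq, hBdef] using h
    · have h := congrFun (congrFun hVtV j) j
      simpa [Matrix.mul_apply, Matrix.one_apply, Matrix.transpose_apply, sq, hBdef] using h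
  obtain ⟨w, hw0, hw1, hw2⟩ := exists_eq_sum_perm_of_mem_doublyStochastic hB
  have hBentry : ∀ i j, (V i j)^2 = ∑ τ : Equiv.Perm (Fin 3), w τ * (τ.permMatrix ℝ) i j := by
    intro i j
    have h := congrFun (congrFun hw2 i) j
    simpa [Matrix.sum_apply, hBdef] using h.symm
  set S : Equiv.Perm (Fin 3) → ℝ := fun τ => ∑ i, Qv i * μ (τ i) with hSdef
  have step1 : ∀ i, Qv i * (Wᵀ * σ' * W) i i = ∑ τ, w τ * (Qv i * μ (τ i)) := by
    intro i
    rw [hAdiag i, Finset.mul_sum]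
    have e : ∀ j, Qv i * ((V i j)^2 * μ j)
        = ∑ τ, w τ * ((if j = τ i then (1:ℝ) else 0) * (Qv i * μ j)) := by
      intro j
      rw [hBentry i j, Finset.sum_mul, Finset.mul_sum]
      refine Finset.sum_congr rfl fun τ _ => ?_
      rw [hP]; ring
    rw [Finset.sum_congr rfl (fun j _ => e j), Finset.sum_comm]
    refine Finset.sum_congr rfl fun τ _ => ?_
    rw [← Finset.mul_sum]
    congr 1
    rw [Finset.sum_congr rfl (fun j _ => by rw [ite_mul, one_mul, zero_mul]),
      Finset.sum_ite_eq' Finset.univ (τ i) (fun j => Qv i * μ j)]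
    simp
  have hsum : ∑ i, Qv i * (Wᵀ * σ' * W) i i = ∑ τ, w τ * S τ := by
    rw [Finset.sum_congr rfl (fun i _ => step1 i), Finset.sum_comm]
    exact Finset.sum_congr rfl fun τ _ => (Finset.mul_sum _ _ _).symm
  have hex : ∃ τ₀ : Equiv.Perm (Fin 3), ∑ τ, w τ * S τ ≤ S τ₀ := by
    by_contra hcon
    push_neg at hcon
    obtain ⟨τ₁, hτ₁⟩ : ∃ τ, 0 < w τ := by
      by_contra hall
      push_neg at hall
      have hz : ∑ τ : Equiv.Perm (Fin 3), w τ = 0 :=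
        Finset.sum_eq_zero fun τ _ => le_antisymm (hall τ) (hw0 τ)
      rw [hw1] at hz; norm_num at hz
    have hcc : (∑ τ, w τ * S τ) < ∑ τ, w τ * S τ := by
      calc (∑ τ, w τ * S τ) < ∑ τ, w τ * (∑ τ', w τ' * S τ') := by
            refine Finset.sum_lt_sum
              (fun τ _ => mul_le_mul_of_nonneg_left (hcon τ).le (hw0 τ))
              ⟨τ₁, Finset.mem_univ _, mul_lt_mul_of_pos_left (hcon τ₁) hτ₁⟩
        _ = ∑ τ, w τ * S τ := by rw [← Finset.sum_mul, hw1, one_mul]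
    exact absurd hcc (lt_irrefl _)
  obtain ⟨τ₀, hτ₀⟩ := hex
  have htrσ : (Q * σ).trace = ∑ i, Qv i * hσ.eigenvalues i := by
    conv_lhs => rw [spectral hσ]
    rw [trace_conj, hWQW, trace_diag_mul]
    exact Finset.sum_congr rfl fun i _ => by rw [Matrix.diagonal_apply_eq]
  have htrσ' : (Q * σ').trace = ∑ i, Qv i * (Wᵀ * σ' * W) i i := by
    rw [hQdef, trace_conj', trace_diag_mul]
  have htr : (Q * (σ' - σ)).trace
      = ∑ i, Qv i * (Wᵀ * σ' * W) i i - ∑ i, Qv i * hσ.eigenvalues i := by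
    rw [mul_sub, trace_sub, htrσ, htrσ']
  have hphi : φ σ' - φ σ
      = φ (diagonal (μ ∘ τ₀)) - φ (diagonal hσ.eigenvalues) := by
    rw [phi_diag_eigen hiso hσ', phi_diag_eigen hiso hσ, phi_perm hiso τ₀ μ]
  have hsub := hQv (μ ∘ τ₀)
  have hfin : ∑ i, Qv i * ((μ ∘ τ₀) i - hσ.eigenvalues i)
      = S τ₀ - ∑ i, Qv i * hσ.eigenvalues i := by
    rw [hSdef, ← Finset.sum_sub_distrib]
    exact Finset.sum_congr rfl fun i _ => by simp [mul_sub]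
  rw [htr, hphi]
  rw [hfin] at hsub
  have heq : ∑ i, Qv i * (Wᵀ * σ' * W) i i = ∑ τ, w τ * S τ := hsum
  linarith


lemma exists_subgradient (f : (Fin 3 → ℝ) → ℝ) (hf : ConvexOn ℝ Set.univ f)
    (x : Fin 3 → ℝ) :
    ∃ g : Fin 3 → ℝ, ∀ y, f y - f x ≥ ∑ i, g i * (y i - x i) := by
  have hcont : Continuous f := by
    rw [← continuousOn_univ]; exact hf.continuousOn isOpen_univ
  set S : Set ((Fin 3 → ℝ) × ℝ) := {p | f p.1 < p.2} with hS
  have hopen : IsOpen S := isOpen_lt (hcont.comp continuous_fst) continuous_snd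
  have hconv : Convex ℝ S := by
    intro p hp q hq a b ha hb hab
    simp only [hS, Set.mem_setOf_eq] at *
    have h1 : f (a • p.1 + b • q.1) ≤ a * f p.1 + b * f q.1 :=
      hf.2 trivial trivial ha hb hab
    have h2 : a * f p.1 + b * f q.1 < a * p.2 + b * q.2 := by
      rcases ha.lt_or_eq with ha' | ha'
      · have h3 := mul_lt_mul_of_pos_left hp ha'
        have h4 := mul_le_mul_of_nonneg_left hq.le hb
        linarith
      · have hb' : 0 < b := by rw [← ha'] at hab; linarith
        have h3 := mul_lt_mul_of_pos_left hq hb'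
        have h4 := mul_le_mul_of_nonneg_left hp.le ha
        linarith
    show f (a • p + b • q).1 < (a • p + b • q).2
    have e1 : (a • p + b • q).1 = a • p.1 + b • q.1 := rfl
    have e2 : (a • p + b • q).2 = a * p.2 + b * q.2 := rfl
    rw [e1, e2]; exact lt_of_le_of_lt h1 h2
  have hx : (x, f x) ∉ S := by simp [hS]
  obtain ⟨ℓ, hℓ⟩ := geometric_hahn_banach_open_point hconv hopen hx
  set c : ℝ := ℓ (0, 1) with hc'
  set g : Fin 3 → ℝ := fun i => ℓ (Pi.single i 1, 0) with hg'
  have hdecomp : ∀ (y : Fin 3 → ℝ) (t : ℝ), ℓ (y, t) = (∑ i, y i * g i) + t * c := by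
    intro y t
    have h1 : ((y, t) : (Fin 3 → ℝ) × ℝ)
        = (∑ i, y i • ((Pi.single i 1 : Fin 3 → ℝ), (0:ℝ))) + t • ((0:Fin 3 → ℝ), (1:ℝ)) := by
      refine Prod.ext ?_ ?_
      · simp only [Prod.fst_add, Prod.fst_sum, Prod.smul_fst, Prod.snd_add]
        funext j
        simp [Pi.single_apply, Finset.sum_apply, Finset.sum_ite_eq]
      · simp [Prod.snd_sum]
    rw [h1, map_add, map_sum, _root_.map_smul, smul_eq_mul]
    congr 1
    refine Finset.sum_congr rfl fun i _ => ?_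
    rw [_root_.map_smul, smul_eq_mul]
  have hc : c < 0 := by
    have h0 : ((x, f x + 1) : (Fin 3 → ℝ) × ℝ) ∈ S := by simp [hS]
    have h := hℓ _ h0
    rw [hdecomp, hdecomp] at h
    linarith
  have key : ∀ y, (∑ i, y i * g i) + f y * c ≤ (∑ i, x i * g i) + f x * c := by
    intro y
    have h2 : ∀ ε > (0:ℝ), (∑ i, y i * g i) + (f y + ε) * c < (∑ i, x i * g i) + f x * c := by
      intro ε hε
      have h0 : ((y, f y + ε) : (Fin 3 → ℝ) × ℝ) ∈ S := by
        simp only [hS, Set.mem_setOf_eq]; linarith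
      have h := hℓ _ h0
      rwa [hdecomp, hdecomp] at h
    by_contra hcon
    push_neg at hcon
    set δ := ((∑ i, y i * g i) + f y * c) - ((∑ i, x i * g i) + f x * c) with hδ
    have hδpos : 0 < δ := by linarith
    have hcpos : (0:ℝ) < -c := by linarith
    have h := h2 (δ / (-c) / 2) (by positivity)
    have hne : c ≠ 0 := hc.ne
    have : (δ / (-c) / 2) * c = -(δ/2) := by field_simp
    nlinarith [this]
  refine ⟨fun i => g i / (-c), fun y => ?_⟩
  have h := key y
  have hpos : (0:ℝ) < -c := by linarith
  have e : ∑ i, (g i / (-c)) * (y i - x i) = (∑ i, g i * (y i - x i)) / (-c) := by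
    rw [Finset.sum_div]
    exact Finset.sum_congr rfl fun i _ => by ring
  rw [ge_iff_le, e, div_le_iff₀ hpos]
  have e2 : ∑ i, g i * (y i - x i) = (∑ i, y i * g i) - (∑ i, x i * g i) := by
    rw [← Finset.sum_sub_distrib]
    exact Finset.sum_congr rfl fun i _ => by ring
  rw [e2]
  nlinarith [h]

end Hill


open Matrix

/-- Extension of Hill's theorem to nonregular functions. For an isotropic
function φ of 3×3 real symmetric matrices and a fixed symmetric σ with eigenvalues
(σ₁,σ₂,σ₃), existence of a tensorial subgradient of φ at σ is equivalent to existence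
of a subgradient of the principal-value function φ̃(v) = φ(diag v) at (σ₁,σ₂,σ₃).
Consequently, convexity of φ (on symmetric matrices) is equivalent to convexity of φ̃. -/
theorem hill_nonsmooth
    (φ : Matrix (Fin 3) (Fin 3) ℝ → ℝ)
    (hiso : ∀ (σ : Matrix (Fin 3) (Fin 3) ℝ), σ.IsHermitian →
      ∀ R : Matrix (Fin 3) (Fin 3) ℝ, R * Rᵀ = 1 → φ (R * σ * Rᵀ) = φ σ)
    (σ : Matrix (Fin 3) (Fin 3) ℝ) (hσ : σ.IsHermitian) :
    ((∃ Q : Matrix (Fin 3) (Fin 3) ℝ, Q.IsHermitian ∧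
        ∀ σ' : Matrix (Fin 3) (Fin 3) ℝ, σ'.IsHermitian →
          φ σ' - φ σ ≥ (Q * (σ' - σ)).trace) ↔
      (∃ Qv : Fin 3 → ℝ, ∀ v : Fin 3 → ℝ,
        φ (Matrix.diagonal v) - φ (Matrix.diagonal hσ.eigenvalues) ≥
          ∑ i, Qv i * (v i - hσ.eigenvalues i))) ∧
    (ConvexOn ℝ {A : Matrix (Fin 3) (Fin 3) ℝ | A.IsHermitian} φ ↔
      ConvexOn ℝ Set.univ (fun v : Fin 3 → ℝ => φ (Matrix.diagonal v))) := by
  constructor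
  · constructor
    · rintro ⟨Q, _hQH, hQ⟩
      exact Hill.vector_of_tensor hiso hσ Q hQ
    · rintro ⟨Qv, hQv⟩
      exact Hill.tensor_of_vector hiso hσ Qv hQv
  · have hset : Convex ℝ {A : Matrix (Fin 3) (Fin 3) ℝ | A.IsHermitian} := by
      intro A hA B hB a b _ha _hb _hab
      show (a • A + b • B).IsHermitian
      have hA' : A.IsHermitian := hA
      have hB' : B.IsHermitian := hB
      rw [Matrix.IsHermitian, Matrix.conjTranspose_add, Matrix.conjTranspose_smul,
        Matrix.conjTranspose_smul, star_trivial, star_trivial, hA', hB']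
    constructor
    · intro hc
      refine ⟨convex_univ, fun v _ w _ a b ha hb hab => ?_⟩
      have h := hc.2 (show Matrix.diagonal v ∈ {A : Matrix (Fin 3) (Fin 3) ℝ | A.IsHermitian}
          from Matrix.isHermitian_diagonal v)
        (show Matrix.diagonal w ∈ {A : Matrix (Fin 3) (Fin 3) ℝ | A.IsHermitian}
          from Matrix.isHermitian_diagonal w) ha hb hab
      have e : a • Matrix.diagonal v + b • Matrix.diagonal w
          = Matrix.diagonal (a • v + b • w) := by
        ext i j
        rcases eq_or_ne i j with rfl | hij
        · simp [Matrix.diagonal_apply_eq]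
        · simp [Matrix.diagonal_apply_ne _ hij]
      rw [e] at h
      exact h
    · intro hc
      refine ⟨hset, fun {A} hA {B} hB a b ha hb hab => ?_⟩
      have hC : (a • A + b • B).IsHermitian := hset hA hB ha hb hab
      obtain ⟨g, hg⟩ := Hill.exists_subgradient (fun v => φ (Matrix.diagonal v)) hc
        hC.eigenvalues
      obtain ⟨Q, _hQH, hQ⟩ := Hill.tensor_of_vector hiso hC g hg
      have h1 := hQ A hA
      have h2 := hQ B hB
      set C := a • A + b • B with hCdef
      have hzero : a • (A - C) + b • (B - C) = 0 := by
        have e1 : a • (A - C) + b • (B - C) = (a • A + b • B) - (a • C + b • C) := by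
          rw [smul_sub, smul_sub]; abel
        rw [e1, ← add_smul, hab, one_smul, ← hCdef, sub_self]
      have hz : a * (Q * (A - C)).trace + b * (Q * (B - C)).trace = 0 := by
        have e2 : (Q * (a • (A - C) + b • (B - C))).trace
            = a * (Q * (A - C)).trace + b * (Q * (B - C)).trace := by
          rw [mul_add, Matrix.trace_add, Matrix.mul_smul, Matrix.mul_smul,
            Matrix.trace_smul, Matrix.trace_smul, smul_eq_mul, smul_eq_mul]
        rw [← e2, hzero, Matrix.mul_zero, Matrix.trace_zero]
      have e3 : a * φ C + b * φ C = φ C := by rw [← add_mul, hab, one_mul]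
      have e4 : a * ((Q * (A - C)).trace) ≤ a * (φ A - φ C) :=
        mul_le_mul_of_nonneg_left h1 ha
      have e5 : b * ((Q * (B - C)).trace) ≤ b * (φ B - φ C) :=
        mul_le_mul_of_nonneg_left h2 hb
      show φ C ≤ a • φ A + b • φ B
      rw [smul_eq_mul, smul_eq_mul]
      nlinarith [hz, e3, e4, e5]
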